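/- For every integer n ≥ 1, num_T(3n,−1) = num_T(3n+1,−1) = num_T(3n+2,−1) = 3^{v_3((3n)!)}, where v_3(M) denotes the exponent of 3 in the prime factorization of M. -/

import Mathlib

open Polynomial Finset
open scoped Classical

noncomputable def DD : ℕ → Polynomial ℤ
  | 0 => 1 + X
  | (j+1) => X ^ (2 * 3 ^ j) - X ^ (3 ^ j) + 1

lemma cyclotomic_six : cyclotomic 6 ℤ = X ^ 2 - X + 1 := by
  symm
  rw [eq_cyclotomic_iff (by norm_num)]
  have : Nat.properDivisors 6 = {1, 2, 3} := by decide
  rw [this]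
  rw [Finset.prod_insert (by decide), Finset.prod_insert (by decide), Finset.prod_singleton,
    cyclotomic_one, cyclotomic_two, cyclotomic_three]
  ring

lemma DD_cyclo : ∀ j, DD j = cyclotomic (2 * 3 ^ j) ℤ := by
  intro j
  induction j with
  | zero => simp [DD, cyclotomic_two]; ring
  | succ j ih =>
    cases j with
    | zero =>
      show DD 1 = cyclotomic 6 ℤ
      rw [_root_.cyclotomic_six]; simp [DD]
    | succ i =>
      have h2 : 2 * 3 ^ (i + 1 + 1) = 2 * 3 ^ (i + 1) * 3 := by ring
      rw [h2, ← cyclotomic_expand_eq_cyclotomic (p := 3) Nat.prime_three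
        (Dvd.intro (2 * 3 ^ i) (by ring)) ℤ (n := 2 * 3 ^ (i+1)), ← ih]
      show DD (i+2) = _
      simp only [DD, map_add, map_sub, map_pow, expand_X, map_one]
      rw [← pow_mul, ← pow_mul]
      ring_nf

lemma DD_monic (j : ℕ) : (DD j).Monic := DD_cyclo j ▸ cyclotomic.monic _ ℤ

lemma DD_ne_zero (j : ℕ) : DD j ≠ 0 := (DD_monic j).ne_zero

lemma DD_irred (j : ℕ) : Irreducible (DD j) :=
  DD_cyclo j ▸ cyclotomic.irreducible (by positivity)

lemma DD_prime (j : ℕ) : Prime (DD j) := (DD_irred j).prime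

lemma DD_not_dvd {i j : ℕ} (h : i ≠ j) : ¬ DD i ∣ DD j := by
  intro hd
  apply h
  have heq : DD i = DD j :=
    eq_of_monic_of_associated (DD_monic i) (DD_monic j)
      ((DD_irred i).associated_of_dvd (DD_irred j) hd)
  rw [DD_cyclo i, DD_cyclo j] at heq
  have h2 := cyclotomic_injective (R := ℤ) heq
  exact Nat.pow_right_injective (by norm_num) (by omega : (3:ℕ)^i = 3^j)

lemma DD_eval_zero : eval (-1 : ℤ) (DD 0) = 0 := by simp [DD]

lemma DD_eval_succ (j : ℕ) : eval (-1 : ℤ) (DD (j+1)) = 3 := by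
  simp only [DD, eval_add, eval_sub, eval_pow, eval_X, eval_one]
  rw [Even.neg_one_pow ⟨3^j, by ring⟩, Odd.neg_one_pow ((by decide : Odd 3).pow)]
  norm_num

lemma prod_DD (k : ℕ) : ∏ j ∈ Finset.range (k+1), DD j = 1 + X ^ (3 ^ k) := by
  induction k with
  | zero => simp [DD]
  | succ k ih =>
    rw [Finset.prod_range_succ, ih]
    show _ * (X ^ (2 * 3 ^ k) - X ^ (3 ^ k) + 1) = _
    have h1 : (X : Polynomial ℤ) ^ (2 * 3 ^ k) = (X ^ 3 ^ k) ^ 2 := by rw [pow_mul']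
    have h2 : (X : Polynomial ℤ) ^ (3 ^ (k+1)) = (X ^ 3 ^ k) ^ 3 := by rw [pow_succ, pow_mul]
    rw [h1, h2]
    ring

lemma coprime_cancel {p g z : Polynomial ℤ} (hp : Prime p) (hpg : ¬ p ∣ g) {t : ℕ}
    (h : g ∣ p ^ t * z) : g ∣ z := by
  have hrel : IsRelPrime g p := (hp.irreducible.isRelPrime_iff_not_dvd.2 hpg).symm
  induction t generalizing z with
  | zero => simpa using h
  | succ t ih =>
    rw [pow_succ, mul_comm (p ^ t) p, mul_assoc] at h
    exact ih (hrel.dvd_of_dvd_mul_left h)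

lemma ALG (s : Finset ℕ) : ∀ (g : Polynomial ℤ) (b m : ℕ → ℕ),
    (g ∣ ∏ i ∈ s, DD i ^ b i) →
    (∀ j ∈ s, ∃ z, ¬ DD j ∣ z ∧ g ∣ DD j ^ m j * z) →
    g ∣ ∏ i ∈ s, DD i ^ m i := by
  induction s using Finset.induction_on with
  | empty => intro g b m h1 _; simpa using h1
  | @insert t s hts ih =>
    intro g b m h1 h2
    have hg0 : g ≠ 0 := by
      rintro rfl
      exact (Finset.prod_ne_zero_iff.2 fun i _ => pow_ne_zero _ (DD_ne_zero i))
        (zero_dvd_iff.mp h1)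
    obtain ⟨k, g', hgd, rfl⟩ := WfDvdMonoid.max_power_factor hg0 (DD_irred t)
    have hg'g : g' ∣ DD t ^ k * g' := Dvd.intro_left _ rfl
    -- k ≤ m t
    obtain ⟨z, hz1, hz2⟩ := h2 t (Finset.mem_insert_self t s)
    have hk : k ≤ m t := by
      have : DD t ^ k ∣ DD t ^ m t :=
        (DD_prime t).pow_dvd_of_dvd_mul_right k hz1 ((dvd_mul_right _ _).trans hz2)
      exact (pow_dvd_pow_iff (DD_ne_zero t) (DD_irred t).not_isUnit).mp this
    -- g' divides the product over s
    rw [Finset.prod_insert hts] at h1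
    have hb' : g' ∣ ∏ i ∈ s, DD i ^ b i :=
      coprime_cancel (DD_prime t) hgd (hg'g.trans h1)
    have h2' : ∀ j ∈ s, ∃ z, ¬ DD j ∣ z ∧ g' ∣ DD j ^ m j * z := fun j hj => by
      obtain ⟨z, hz1, hz2⟩ := h2 j (Finset.mem_insert_of_mem hj)
      exact ⟨z, hz1, hg'g.trans hz2⟩
    have := ih g' b m hb' h2'
    rw [Finset.prod_insert hts]
    exact mul_dvd_mul (pow_dvd_pow _ hk) this

lemma swap_prod (M : ℕ) (c : ℕ → ℕ) :
    ∏ k ∈ Finset.range M, (∏ j ∈ Finset.range (k+1), DD j) ^ c k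
      = ∏ j ∈ Finset.range M, DD j ^ (∑ k ∈ Finset.Ico j M, c k) := by
  induction M with
  | zero => simp
  | succ M ih =>
    have hR : ∏ j ∈ Finset.range (M+1), DD j ^ (∑ k ∈ Finset.Ico j (M+1), c k)
        = (∏ j ∈ Finset.range M, DD j ^ ((∑ k ∈ Finset.Ico j M, c k) + c M)) * DD M ^ c M := by
      rw [Finset.prod_range_succ]
      congr 1
      · exact Finset.prod_congr rfl fun j hj =>
          congrArg _ (Finset.sum_Ico_succ_top (le_of_lt (Finset.mem_range.1 hj)) c)
      · rw [Finset.sum_Ico_succ_top (le_refl M), Finset.Ico_self, Finset.sum_empty, zero_add]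
    rw [Finset.prod_range_succ, ih, hR, ← Finset.prod_pow, Finset.prod_range_succ,
      ← mul_assoc, ← Finset.prod_mul_distrib]
    simp [pow_add]

section PartN

variable {N : ℕ}

lemma filter_eq_range_log (hN : 1 ≤ N) :
    (Finset.range (N + 1)).filter (fun k => 3 ^ k ≤ N) = Finset.range (Nat.log 3 N + 1) := by
  ext k
  simp only [Finset.mem_filter, Finset.mem_range]
  constructor
  · rintro ⟨-, h⟩
    have := (Nat.le_log_iff_pow_le (by norm_num) (by omega)).2 h
    omega
  · intro h
    have h3 : 3 ^ k ≤ N := (Nat.le_log_iff_pow_le (by norm_num) (by omega)).1 (by omega)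
    have : k < 3 ^ k := Nat.lt_pow_self (by norm_num)
    exact ⟨by omega, h3⟩

lemma part_pow (hN : 1 ≤ N) {μ : Nat.Partition N} (hμ : ∀ i ∈ μ.parts, ∃ k : ℕ, i = 3 ^ k)
    {a : ℕ} (ha : a ∈ μ.parts) : ∃ k, k ≤ Nat.log 3 N ∧ a = 3 ^ k := by
  obtain ⟨k, rfl⟩ := hμ a ha
  have hle : 3 ^ k ≤ N := by
    have := Multiset.single_le_sum (fun x _ => Nat.zero_le x) _ ha
    rwa [μ.parts_sum] at this
  exact ⟨k, (Nat.le_log_iff_pow_le (by norm_num) (by omega)).2 hle, rfl⟩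

lemma sum_over_counts (hN : 1 ≤ N) {μ : Nat.Partition N}
    (hμ : ∀ i ∈ μ.parts, ∃ k : ℕ, i = 3 ^ k) (f : ℕ → ℕ) :
    ∑ a ∈ μ.parts.toFinset, (μ.parts.count a) * f a
      = ∑ k ∈ Finset.range (Nat.log 3 N + 1), (μ.parts.count (3 ^ k)) * f (3 ^ k) := by
  have hinj : ∀ x ∈ Finset.range (Nat.log 3 N + 1), ∀ y ∈ Finset.range (Nat.log 3 N + 1),
      (3:ℕ) ^ x = 3 ^ y → x = y := fun a _ b _ hab => Nat.pow_right_injective (by norm_num) hab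
  calc ∑ a ∈ μ.parts.toFinset, μ.parts.count a * f a
      = ∑ a ∈ (Finset.range (Nat.log 3 N + 1)).image (fun k => 3 ^ k),
          μ.parts.count a * f a := by
        apply Finset.sum_subset
        · intro a ha
          obtain ⟨k, hk, rfl⟩ := part_pow hN hμ (Multiset.mem_toFinset.1 ha)
          exact Finset.mem_image.2 ⟨k, Finset.mem_range.2 (by omega), rfl⟩
        · intro a _ ha
          have : μ.parts.count a = 0 := by
            rw [Multiset.count_eq_zero, ← Multiset.mem_toFinset]; exact ha
          simp [this]
    _ = _ := Finset.sum_image hinj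

lemma sum_pow_mul_count (hN : 1 ≤ N) {μ : Nat.Partition N}
    (hμ : ∀ i ∈ μ.parts, ∃ k : ℕ, i = 3 ^ k) :
    ∑ k ∈ Finset.range (Nat.log 3 N + 1), (μ.parts.count (3 ^ k)) * 3 ^ k = N := by
  have h := sum_over_counts hN hμ id
  simp only [id] at h
  rw [← h]
  have h2 := Finset.sum_multiset_map_count μ.parts (id : ℕ → ℕ)
  rw [Multiset.map_id] at h2
  simp only [smul_eq_mul, id] at h2
  rw [← h2, μ.parts_sum]

lemma sum_count_eq_card (hN : 1 ≤ N) {μ : Nat.Partition N}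
    (hμ : ∀ i ∈ μ.parts, ∃ k : ℕ, i = 3 ^ k) :
    ∑ k ∈ Finset.range (Nat.log 3 N + 1), μ.parts.count (3 ^ k) = Multiset.card μ.parts := by
  have h := sum_over_counts hN hμ (fun _ => 1)
  simpa [Multiset.toFinset_sum_count_eq] using h.symm

end PartN

noncomputable def wpart (N j : ℕ) : Nat.Partition N where
  parts := Multiset.replicate (N / 3 ^ j) (3 ^ j) + Multiset.replicate (N % 3 ^ j) 1
  parts_pos := by
    intro i hi
    rcases Multiset.mem_add.1 hi with h | h
    · rw [Multiset.eq_of_mem_replicate h]; positivity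
    · rw [Multiset.eq_of_mem_replicate h]; norm_num
  parts_sum := by
    rw [Multiset.sum_add, Multiset.sum_replicate, Multiset.sum_replicate, smul_eq_mul,
      smul_eq_mul, mul_one, mul_comm]
    exact Nat.div_add_mod N (3 ^ j)

lemma wpart_ternary (N j : ℕ) : ∀ i ∈ (wpart N j).parts, ∃ k : ℕ, i = 3 ^ k := by
  intro i hi
  rcases Multiset.mem_add.1 hi with h | h
  · exact ⟨j, Multiset.eq_of_mem_replicate h⟩
  · exact ⟨0, by rw [Multiset.eq_of_mem_replicate h, pow_zero]⟩

lemma count_wpart_self (N j : ℕ) : N / 3 ^ j ≤ (wpart N j).parts.count (3 ^ j) := by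
  show _ ≤ Multiset.count _ (_ + _)
  rw [Multiset.count_add, Multiset.count_replicate, if_pos rfl]
  exact Nat.le_add_right _ _

lemma count_wpart0 (N k : ℕ) (hk : 1 ≤ k) : (wpart N 0).parts.count (3 ^ k) = 0 := by
  show Multiset.count _ (_ + _) = 0
  rw [Multiset.count_add, Multiset.count_replicate, Multiset.count_replicate, pow_zero]
  have h1 : (3:ℕ) ^ k ≠ 1 := by
    have : (3:ℕ) ^ 1 ≤ 3 ^ k := Nat.pow_le_pow_right (by norm_num) hk
    omega
  rw [if_neg (Ne.symm h1), if_neg (Ne.symm h1)]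

def SS (N j : ℕ) : ℕ := ∑ k ∈ Finset.Ico j (Nat.log 3 N + 1), N / 3 ^ k

def mm (N j : ℕ) : ℕ := SS N (j + 1)

noncomputable def ee (N : ℕ) (μ : Nat.Partition N) (j : ℕ) : ℕ :=
  ∑ k ∈ Finset.Ico j (Nat.log 3 N + 1), (N / 3 ^ k - μ.parts.count (3 ^ k))

noncomputable def tc (N : ℕ) (μ : Nat.Partition N) (j : ℕ) : ℕ :=
  ∑ k ∈ Finset.Ico j (Nat.log 3 N + 1), μ.parts.count (3 ^ k)

section PartN2

variable {N : ℕ} {μ : Nat.Partition N}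

lemma tc_le_div (hN : 1 ≤ N) (hμ : ∀ i ∈ μ.parts, ∃ k : ℕ, i = 3 ^ k) (j : ℕ) :
    tc N μ j ≤ N / 3 ^ j := by
  rw [Nat.le_div_iff_mul_le (Nat.pow_pos (n := j) (by norm_num : 0 < 3))]
  calc tc N μ j * 3 ^ j = ∑ k ∈ Finset.Ico j (Nat.log 3 N + 1), μ.parts.count (3 ^ k) * 3 ^ j := by
        rw [tc, Finset.sum_mul]
    _ ≤ ∑ k ∈ Finset.Ico j (Nat.log 3 N + 1), μ.parts.count (3 ^ k) * 3 ^ k := by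
        apply Finset.sum_le_sum
        intro k hk
        exact Nat.mul_le_mul_left _ (Nat.pow_le_pow_right (by norm_num)
          (Finset.mem_Ico.1 hk).1)
    _ ≤ ∑ k ∈ Finset.range (Nat.log 3 N + 1), μ.parts.count (3 ^ k) * 3 ^ k := by
        apply Finset.sum_le_sum_of_subset
        intro k hk
        simp only [Finset.mem_Ico] at hk
        exact Finset.mem_range.2 hk.2
    _ = N := sum_pow_mul_count hN hμ

lemma cnt_le_div (hN : 1 ≤ N) (hμ : ∀ i ∈ μ.parts, ∃ k : ℕ, i = 3 ^ k) {k : ℕ}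
    (hk : k ≤ Nat.log 3 N) : μ.parts.count (3 ^ k) ≤ N / 3 ^ k := by
  refine le_trans ?_ (tc_le_div hN hμ k)
  exact Finset.single_le_sum (f := fun k => μ.parts.count (3 ^ k))
    (fun _ _ => Nat.zero_le _) (Finset.mem_Ico.2 ⟨le_refl k, by omega⟩)

lemma ee_eq (hN : 1 ≤ N) (hμ : ∀ i ∈ μ.parts, ∃ k : ℕ, i = 3 ^ k) (j : ℕ) :
    ee N μ j = SS N j - tc N μ j := by
  rw [ee, SS, tc, Finset.sum_tsub_distrib]
  intro k hk
  exact cnt_le_div hN hμ (by have := (Finset.mem_Ico.1 hk).2; omega)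

lemma SS_split {j : ℕ} (hj : j ≤ Nat.log 3 N) : SS N j = N / 3 ^ j + SS N (j + 1) :=
  Finset.sum_eq_sum_Ico_succ_bot (by omega) _

lemma tc_le_SS (hN : 1 ≤ N) (hμ : ∀ i ∈ μ.parts, ∃ k : ℕ, i = 3 ^ k) (j : ℕ) :
    tc N μ j ≤ SS N j := by
  apply Finset.sum_le_sum
  intro k hk
  exact cnt_le_div hN hμ (by have := (Finset.mem_Ico.1 hk).2; omega)

lemma mm_le_ee (hN : 1 ≤ N) (hμ : ∀ i ∈ μ.parts, ∃ k : ℕ, i = 3 ^ k) {j : ℕ}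
    (hj : j ≤ Nat.log 3 N) : mm N j ≤ ee N μ j := by
  have h1 := ee_eq hN hμ j
  have h2 := SS_split (N := N) hj
  have h3 := tc_le_div hN hμ j
  have h4 := tc_le_SS hN hμ j
  rw [mm]; omega

lemma ee_sub_mm (hN : 1 ≤ N) (hμ : ∀ i ∈ μ.parts, ∃ k : ℕ, i = 3 ^ k) {j : ℕ}
    (hj : j ≤ Nat.log 3 N) : ee N μ j - mm N j = N / 3 ^ j - tc N μ j := by
  have h1 := ee_eq hN hμ j
  have h2 := SS_split (N := N) hj
  have h3 := tc_le_div hN hμ j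
  have h4 := tc_le_SS hN hμ j
  rw [mm]; omega

lemma tc_wpart (hN : 1 ≤ N) {j : ℕ} (hj : j ≤ Nat.log 3 N) :
    tc N (wpart N j) j = N / 3 ^ j := by
  refine le_antisymm (tc_le_div hN (wpart_ternary N j) j) ?_
  refine le_trans (count_wpart_self N j) ?_
  exact Finset.single_le_sum (f := fun k => (wpart N j).parts.count (3 ^ k))
    (fun _ _ => Nat.zero_le _) (Finset.mem_Ico.2 ⟨le_refl j, by omega⟩)

lemma ee_wpart (hN : 1 ≤ N) {j : ℕ} (hj : j ≤ Nat.log 3 N) :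
    ee N (wpart N j) j = mm N j := by
  have h1 := ee_eq hN (wpart_ternary N j) j
  have h2 := SS_split (N := N) hj
  have h3 := tc_wpart hN hj
  rw [mm]; omega

end PartN2

/-- The ternary partitions of `n`: partitions of `n` all of whose parts are powers of `3`. -/
noncomputable def terParts (n : ℕ) : Finset (Nat.Partition n) :=
  Finset.univ.filter (fun μ => ∀ i ∈ μ.parts, ∃ k : ℕ, i = 3 ^ k)

/-- `h_{T,λ}(x) = ∏_{k ≥ 0, 3^k ≤ n} (1+x^{3^k})^(⌊n/3^k⌋ - m_λ(3^k))` in `ℤ[x]`. -/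
noncomputable def hT (n : ℕ) (μ : Nat.Partition n) : Polynomial ℤ :=
  ∏ k ∈ (Finset.range (n + 1)).filter (fun k => 3 ^ k ≤ n),
    (1 + X ^ (3 ^ k)) ^ (n / 3 ^ k - μ.parts.count (3 ^ k))

/-- `G_T(n,x)`: the (normalized) gcd of the `h_{T,λ}(x)` over ternary partitions `λ` of `n`. -/
noncomputable def GT (n : ℕ) : Polynomial ℤ :=
  (terParts n).gcd (hT n)

theorem GT_dvd_sum (n : ℕ) :
    ∃ q : Polynomial ℤ, (∑ μ ∈ terParts n, hT n μ) = GT n * q :=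
  exists_eq_mul_right_of_dvd (Finset.dvd_sum fun _ hμ => Finset.gcd_dvd hμ)

/-- `num_T(n,x) = (∑_{λ ternary partition of n} h_{T,λ}(x)) / G_T(n,x)`. -/
noncomputable def numT (n : ℕ) : Polynomial ℤ :=
  (GT_dvd_sum n).choose


section Main

variable {N : ℕ}

lemma mem_terParts {μ : Nat.Partition N} :
    μ ∈ terParts N ↔ ∀ i ∈ μ.parts, ∃ k : ℕ, i = 3 ^ k := by
  simp [terParts]

lemma hT_eq (hN : 1 ≤ N) (μ : Nat.Partition N) :
    hT N μ = ∏ j ∈ Finset.range (Nat.log 3 N + 1), DD j ^ ee N μ j := by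
  rw [hT, filter_eq_range_log hN]
  calc ∏ k ∈ Finset.range (Nat.log 3 N + 1),
        (1 + X ^ 3 ^ k) ^ (N / 3 ^ k - μ.parts.count (3 ^ k))
      = ∏ k ∈ Finset.range (Nat.log 3 N + 1),
          (∏ j ∈ Finset.range (k+1), DD j) ^ (N / 3 ^ k - μ.parts.count (3 ^ k)) :=
        Finset.prod_congr rfl fun k _ => by rw [prod_DD]
    _ = _ := by rw [swap_prod]; exact Finset.prod_congr rfl fun j _ => by rw [ee]

noncomputable def G0 (N : ℕ) : Polynomial ℤ :=
  ∏ j ∈ Finset.range (Nat.log 3 N + 1), DD j ^ mm N j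

noncomputable def rr (N : ℕ) (μ : Nat.Partition N) : Polynomial ℤ :=
  ∏ j ∈ Finset.range (Nat.log 3 N + 1), DD j ^ (ee N μ j - mm N j)

lemma G0_monic : (G0 N).Monic :=
  monic_prod_of_monic _ _ fun j _ => (DD_monic j).pow _

lemma G0_mul_rr (hN : 1 ≤ N) {μ : Nat.Partition N} (hμ : μ ∈ terParts N) :
    G0 N * rr N μ = hT N μ := by
  rw [G0, rr, ← Finset.prod_mul_distrib, hT_eq hN]
  refine Finset.prod_congr rfl fun j hj => ?_
  rw [← pow_add]
  congr 1
  have := mm_le_ee hN (mem_terParts.1 hμ) (j := j) (by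
    have := Finset.mem_range.1 hj; omega)
  omega

lemma G0_dvd_GT (hN : 1 ≤ N) : G0 N ∣ GT N :=
  Finset.dvd_gcd fun μ hμ => Dvd.intro _ (G0_mul_rr hN hμ)

lemma wpart_mem (N j : ℕ) : wpart N j ∈ terParts N := mem_terParts.2 (wpart_ternary N j)

lemma GT_dvd_G0 (hN : 1 ≤ N) : GT N ∣ G0 N := by
  refine ALG _ (GT N) (ee N (wpart N 0)) (mm N) ?_ ?_
  · rw [← hT_eq hN]
    exact Finset.gcd_dvd (wpart_mem N 0)
  · intro j hj
    have hjL : j ≤ Nat.log 3 N := by have := Finset.mem_range.1 hj; omega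
    refine ⟨∏ i ∈ (Finset.range (Nat.log 3 N + 1)).erase j, DD i ^ ee N (wpart N j) i,
      ?_, ?_⟩
    · intro hdvd
      obtain ⟨i, hi, hd⟩ := (Prime.dvd_finset_prod_iff (DD_prime j) _).1 hdvd
      exact DD_not_dvd (Ne.symm (Finset.mem_erase.1 hi).1) ((DD_prime j).dvd_of_dvd_pow hd)
    · have h1 : GT N ∣ hT N (wpart N j) := Finset.gcd_dvd (wpart_mem N j)
      rw [hT_eq hN] at h1
      rw [← Finset.mul_prod_erase _ _ hj, ee_wpart hN hjL] at h1
      exact h1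

lemma GT_eq_G0 (hN : 1 ≤ N) : GT N = G0 N := by
  have h1 : Associated (GT N) (G0 N) := associated_of_dvd_dvd (GT_dvd_G0 hN) (G0_dvd_GT hN)
  calc GT N = normalize (GT N) := (Finset.normalize_gcd).symm
    _ = normalize (G0 N) := normalize_eq_normalize (GT_dvd_G0 hN) (G0_dvd_GT hN)
    _ = G0 N := G0_monic.normalize_eq_self

lemma numT_eq (hN : 1 ≤ N) : numT N = ∑ μ ∈ terParts N, rr N μ := by
  have hspec : ∑ μ ∈ terParts N, hT N μ = GT N * numT N := (GT_dvd_sum N).choose_spec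
  have h1 : ∑ μ ∈ terParts N, hT N μ = G0 N * ∑ μ ∈ terParts N, rr N μ := by
    rw [Finset.mul_sum]
    exact Finset.sum_congr rfl fun μ hμ => (G0_mul_rr hN hμ).symm
  rw [h1, GT_eq_G0 hN] at hspec
  exact (mul_left_cancel₀ G0_monic.ne_zero hspec).symm

end Main

section Eval

variable {N : ℕ}

lemma eq_wpart0 (hN : 1 ≤ N) {μ : Nat.Partition N} (hμ : ∀ i ∈ μ.parts, ∃ k : ℕ, i = 3 ^ k)
    (h : ee N μ 0 = mm N 0) : μ = wpart N 0 := by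
  have h1 := ee_eq hN hμ 0
  have h2 := SS_split (N := N) (Nat.zero_le _)
  have h3 := tc_le_div hN hμ 0
  have h4 := tc_le_SS hN hμ 0
  rw [mm] at h
  rw [pow_zero, Nat.div_one] at h2 h3
  have h5 : tc N μ 0 = N := by omega
  have hcard : Multiset.card μ.parts = N := by
    have h6 := sum_count_eq_card hN hμ
    rw [Finset.range_eq_Ico] at h6
    rw [tc] at h5
    omega
  have hones : ∀ b ∈ μ.parts, b = 1 := by
    intro b hb
    by_contra hb1
    have hb2 : 2 ≤ b := by have := μ.parts_pos hb; omega
    obtain ⟨t, ht⟩ := Multiset.exists_cons_of_mem hb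
    have hsum : b + t.sum = N := by rw [← μ.parts_sum, ht, Multiset.sum_cons]
    have hcardt : Multiset.card t + 1 = N := by rw [← hcard, ht, Multiset.card_cons]
    have hle : Multiset.card t ≤ t.sum := by
      have := Multiset.card_nsmul_le_sum (s := t) (a := 1)
        (fun x hx => μ.parts_pos (by rw [ht]; exact Multiset.mem_cons_of_mem hx))
      simpa using this
    omega
  have hrep : μ.parts = Multiset.replicate N 1 := by
    have := Multiset.eq_replicate_of_mem hones
    rwa [hcard] at this
  apply Nat.Partition.ext
  rw [hrep]
  show _ = Multiset.replicate (N / 3 ^ 0) (3 ^ 0) + Multiset.replicate (N % 3 ^ 0) 1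
  simp [Nat.mod_one]

lemma eval_rr_ne (hN : 1 ≤ N) {μ : Nat.Partition N} (hμ : μ ∈ terParts N)
    (hne : μ ≠ wpart N 0) : eval (-1 : ℤ) (rr N μ) = 0 := by
  rw [rr, eval_prod]
  apply Finset.prod_eq_zero (Finset.mem_range.2 (Nat.succ_pos _))
  rw [eval_pow, DD_eval_zero]
  have h1 : ee N μ 0 ≠ mm N 0 := fun h => hne (eq_wpart0 hN (mem_terParts.1 hμ) h)
  have h2 := mm_le_ee hN (mem_terParts.1 hμ) (j := 0) (Nat.zero_le _)
  exact zero_pow (by omega)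

lemma eval_rr_wpart0 (hN : 1 ≤ N) :
    eval (-1 : ℤ) (rr N (wpart N 0))
      = 3 ^ (∑ k ∈ Finset.Ico 1 (Nat.log 3 N + 1), N / 3 ^ k) := by
  rw [rr, eval_prod]
  have heval : ∀ j ∈ Finset.range (Nat.log 3 N + 1),
      eval (-1 : ℤ) (DD j ^ (ee N (wpart N 0) j - mm N j))
        = eval (-1 : ℤ) (DD j) ^ (ee N (wpart N 0) j - mm N j) :=
    fun j _ => by rw [eval_pow]
  rw [Finset.prod_congr rfl heval, Finset.prod_range_succ']
  have h0 : ee N (wpart N 0) 0 - mm N 0 = 0 := by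
    rw [ee_wpart hN (Nat.zero_le _)]; omega
  rw [h0, pow_zero, mul_one]
  have hterm : ∀ i ∈ Finset.range (Nat.log 3 N),
      eval (-1 : ℤ) (DD (i + 1)) ^ (ee N (wpart N 0) (i + 1) - mm N (i + 1))
        = (3 : ℤ) ^ (N / 3 ^ (i + 1)) := by
    intro i hi
    have hiL : i + 1 ≤ Nat.log 3 N := Finset.mem_range.1 hi
    have htc : tc N (wpart N 0) (i + 1) = 0 := by
      rw [tc]
      apply Finset.sum_eq_zero
      intro k hk
      exact count_wpart0 N k (by have := (Finset.mem_Ico.1 hk).1; omega)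
    rw [DD_eval_succ, ee_sub_mm hN (wpart_ternary N 0) hiL, htc, Nat.sub_zero]
  rw [Finset.prod_congr rfl hterm, Finset.prod_pow_eq_pow_sum]
  congr 1
  rw [Finset.sum_Ico_eq_sum_range]
  simp [add_comm]

lemma eval_numT (hN : 1 ≤ N) :
    eval (-1 : ℤ) (numT N) = 3 ^ (∑ k ∈ Finset.Ico 1 (Nat.log 3 N + 1), N / 3 ^ k) := by
  rw [numT_eq hN, eval_finset_sum,
    Finset.sum_eq_single_of_mem (wpart N 0) (wpart_mem N 0)
      (fun μ hμ hne => eval_rr_ne hN hμ hne)]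
  exact eval_rr_wpart0 hN

end Eval

lemma div_shift {a r k : ℕ} (hr : r < 3) (hk : 1 ≤ k) : (3 * a + r) / 3 ^ k = 3 * a / 3 ^ k := by
  obtain ⟨i, rfl⟩ : ∃ i, k = i + 1 := ⟨k - 1, by omega⟩
  rw [pow_succ', ← Nat.div_div_eq_div_mul, ← Nat.div_div_eq_div_mul]
  congr 1
  rw [add_comm, Nat.add_mul_div_left _ _ (by norm_num : 0 < 3), Nat.div_eq_of_lt hr,
    Nat.mul_div_cancel_left _ (by norm_num : 0 < 3), zero_add]

lemma eval_numT_shift (n r : ℕ) (hn : 1 ≤ n) (hr : r < 3) :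
    eval (-1 : ℤ) (numT (3 * n + r)) = 3 ^ ((Nat.factorial (3 * n)).factorization 3) := by
  haveI : Fact (Nat.Prime 3) := ⟨Nat.prime_three⟩
  have hN : 1 ≤ 3 * n + r := by omega
  rw [eval_numT hN]
  congr 1
  have hlog : Nat.log 3 (3 * n) ≤ Nat.log 3 (3 * n + r) := Nat.log_mono_right (by omega)
  rw [Nat.factorization_def _ Nat.prime_three,
    padicValNat_factorial (b := Nat.log 3 (3 * n + r) + 1) (by omega)]
  exact Finset.sum_congr rfl fun k hk =>
    div_shift hr (Finset.mem_Ico.1 hk).1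

/-- For every integer `n ≥ 1`,
`num_T(3n,−1) = num_T(3n+1,−1) = num_T(3n+2,−1) = 3^{v₃((3n)!)}`, where `v₃(M)` is the
exponent of `3` in the prime factorization of `M`. -/
theorem numT_eval_neg_one_blocks (n : ℕ) (hn : 1 ≤ n) :
    Polynomial.eval (-1 : ℤ) (numT (3 * n)) = Polynomial.eval (-1 : ℤ) (numT (3 * n + 1)) ∧
    Polynomial.eval (-1 : ℤ) (numT (3 * n + 1)) = Polynomial.eval (-1 : ℤ) (numT (3 * n + 2)) ∧
    Polynomial.eval (-1 : ℤ) (numT (3 * n + 2)) =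
      3 ^ ((Nat.factorial (3 * n)).factorization 3) := by
  have h0 := eval_numT_shift n 0 hn (by norm_num)
  have h1 := eval_numT_shift n 1 hn (by norm_num)
  have h2 := eval_numT_shift n 2 hn (by norm_num)
  rw [add_zero] at h0
  exact ⟨h0.trans h1.symm, h1.trans h2.symm, h2⟩
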